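/- Let G act by isometries on a metric space X, properly and cocompactly, and let h ∈ G with Min_{K'}(h) nonempty. Then for every K ≥ K' there exists a constant C > 0 such that Min_K(h) is contained in the C-neighbourhood of Min_{K'}(h). -/

import Mathlib

/-- for a proper cocompact isometric action, every displacement set
`Min_K(h)` is contained in a `C`-neighbourhood of `Min_{K'}(h)` (when the latter is
nonempty and `K' ≤ K`). -/
theorem displacement_set_in_neighbourhood_of_smaller
    {G X : Type*} [Group G] [MetricSpace X] [MulAction G X]
    (hiso : ∀ (g : G) (x y : X), dist (g • x) (g • y) = dist x y)
    (hproper : ∀ (x : X) (r : ℝ), {g : G | dist x (g • x) ≤ r}.Finite)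
    (hcocompact : ∃ (x₀ : X) (D : ℝ), 0 < D ∧ ∀ x : X, ∃ g : G, dist x (g • x₀) ≤ D)
    (h : G) (K' : ℝ) (hne : ∃ x : X, dist x (h • x) ≤ K') :
    ∀ K : ℝ, K' ≤ K → ∃ C : ℝ, 0 < C ∧
      ∀ x : X, dist x (h • x) ≤ K →
        ∃ y : X, dist y (h • y) ≤ K' ∧ dist x y ≤ C := by
  classical
  obtain ⟨x₀, D, hD, hcov⟩ := hcocompact
  obtain ⟨y₀, hy₀⟩ := hne
  intro K hKK'
  -- key fact: dist x₀ (g⁻¹ • z) = dist (g • x₀) z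
  have hkey : ∀ (g : G) (z : X), dist x₀ (g⁻¹ • z) = dist (g • x₀) z := by
    intro g z
    rw [← hiso g x₀ (g⁻¹ • z), smul_inv_smul]
  set F : Set G := {u : G | dist x₀ (u • x₀) ≤ K + 2 * D} with hF
  have hFfin : F.Finite := hproper x₀ (K + 2 * D)
  let f : G → ℝ := fun u =>
    if hu : ∃ g' : G, g'⁻¹ * h * g' = u then dist x₀ (hu.choose⁻¹ • y₀) else 0
  obtain ⟨M, hM⟩ := (hFfin.image f).bddAbove
  refine ⟨D + max M 0 + 1, by positivity, ?_⟩
  intro x hx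
  obtain ⟨g, hg⟩ := hcov x
  have huF : (g⁻¹ * h * g) ∈ F := by
    have h1 : dist (g • x₀) (h • (g • x₀)) ≤ K + 2 * D := by
      calc dist (g • x₀) (h • (g • x₀))
          ≤ dist (g • x₀) x + dist x (h • x) + dist (h • x) (h • (g • x₀)) :=
            dist_triangle4 _ _ _ _
        _ ≤ D + K + D := by
            rw [hiso h]
            have hg' : dist (g • x₀) x ≤ D := by rw [dist_comm]; exact hg
            gcongr
        _ = K + 2 * D := by ring
    show dist x₀ ((g⁻¹ * h * g) • x₀) ≤ K + 2 * D
    have : (g⁻¹ * h * g) • x₀ = g⁻¹ • (h • (g • x₀)) := by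
      simp [mul_smul]
    rw [this, hkey g]
    exact h1
  have hu' : ∃ g' : G, g'⁻¹ * h * g' = g⁻¹ * h * g := ⟨g, rfl⟩
  set g' := hu'.choose with hg'def
  have hg'spec : g'⁻¹ * h * g' = g⁻¹ * h * g := hu'.choose_spec
  refine ⟨(g * g'⁻¹) • y₀, ?_, ?_⟩
  · have : dist ((g * g'⁻¹) • y₀) (h • (g * g'⁻¹) • y₀)
        = dist y₀ ((g' * g⁻¹ * h * (g * g'⁻¹)) • y₀) := by
      rw [← hiso (g' * g⁻¹)]
      simp [mul_smul]
    rw [this]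
    have heq : g' * g⁻¹ * h * (g * g'⁻¹) = h := by
      have : g' * (g⁻¹ * h * g) * g'⁻¹ = g' * (g'⁻¹ * h * g') * g'⁻¹ := by rw [hg'spec]
      group at this ⊢
      simpa using this
    rw [heq]
    exact hy₀
  · have h2 : dist (g • x₀) ((g * g'⁻¹) • y₀) = dist x₀ (g'⁻¹ • y₀) := by
      rw [mul_smul, hiso g]
    have h3 : dist x₀ (g'⁻¹ • y₀) = f (g⁻¹ * h * g) := by
      simp only [f, dif_pos hu']
      rfl
    have h4 : f (g⁻¹ * h * g) ≤ M := hM ⟨_, huF, rfl⟩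
    calc dist x ((g * g'⁻¹) • y₀)
        ≤ dist x (g • x₀) + dist (g • x₀) ((g * g'⁻¹) • y₀) := dist_triangle _ _ _
      _ ≤ D + max M 0 := by
          rw [h2, h3]
          exact add_le_add hg (h4.trans (le_max_left _ _))
      _ ≤ D + max M 0 + 1 := by linarith
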